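/- arXiv:alg-geom/9304006 — 4 statements merged into one kernel-verified Lean document; each statement's English description precedes it below -/
import Mathlib

section
/- For every τ in the upper half plane ℍ, the theta constants θ01(0,τ) and θ10(0,τ) are nonzero; equivalently, jacobiTheta₂ (1/2) τ ≠ 0 and jacobiTheta₂ (τ/2) τ ≠ 0. -/
open Complex
open Real

/-- The theta function with characteristics `a, b ∈ ℝ`:
`θ[a,b](z,τ) = exp(πi a² τ + 2πi a (z+b)) · θ₂(z + aτ + b, τ)`. -/
noncomputable def thetaChar (a b : ℝ) (z τ : ℂ) : ℂ :=
  Complex.exp (Real.pi * Complex.I * (a : ℂ) ^ 2 * τ +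
      2 * Real.pi * Complex.I * (a : ℂ) * (z + (b : ℂ))) *
    jacobiTheta₂ (z + (a : ℂ) * τ + (b : ℂ)) τ

lemma geom_int {r : ℝ} (h0 : 0 ≤ r) (h1 : r < 1) :
    HasSum (fun n : ℤ => r ^ n.natAbs) ((1 - r)⁻¹ + r * (1 - r)⁻¹) := by
  have hg : HasSum (fun n : ℕ => r ^ n) (1 - r)⁻¹ := hasSum_geometric_of_lt_one h0 h1
  have hg2 : HasSum (fun n : ℕ => r ^ (n + 1)) (r * (1 - r)⁻¹) := by
    simpa [pow_succ, mul_comm] using hg.mul_left r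
  have hna : ∀ n : ℕ, ((-1 + -(n:ℤ)).natAbs) = n + 1 := by intro n; omega
  have := HasSum.of_nat_of_neg_add_one (f := fun n : ℤ => r ^ n.natAbs)
    (by simpa using hg) (by simpa [hna] using hg2)
  simpa using this

lemma near_one {z τ : ℂ} (hz : z.im = 0) (hτ : 1 ≤ τ.im) : jacobiTheta₂ z τ ≠ 0 := by
  have hτ0 : 0 < τ.im := by linarith
  have h := hasSum_jacobiTheta₂_term z hτ0
  have h1 : HasSum (fun n : ℤ => if n = 0 then (1:ℂ) else 0) 1 := hasSum_ite_eq 0 1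
  have hf : HasSum (fun n : ℤ => jacobiTheta₂_term n z τ - if n = 0 then 1 else 0)
      (jacobiTheta₂ z τ - 1) := h.sub h1
  set r : ℝ := rexp (-π) with hrdef
  have hr0 : 0 ≤ r := (Real.exp_pos _).le
  have hr1 : r < 1 := Real.exp_lt_one_iff.mpr (by simpa using pi_pos)
  have hgeom := geom_int hr0 hr1
  set c : ℤ → ℝ := fun n => if n = 0 then 0 else r ^ n.natAbs with hc
  have hcsum : HasSum c ((1 - r)⁻¹ + r * (1 - r)⁻¹ - 1) := by
    have h0 : HasSum (fun n : ℤ => (if n = 0 then (1:ℝ) else 0)) 1 := hasSum_ite_eq 0 1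
    refine (hgeom.sub h0).congr_fun fun n => ?_
    by_cases hn : n = 0 <;> simp [hc, hn]
  have hbound : ∀ n : ℤ, ‖jacobiTheta₂_term n z τ - if n = 0 then 1 else 0‖ ≤ c n := by
    intro n
    by_cases hn : n = 0
    · simp [hn, jacobiTheta₂_term, hc]
    · rw [hc]; simp only [if_neg hn]
      rw [sub_zero, norm_jacobiTheta₂_term, hz]
      rw [← Real.exp_nat_mul]
      apply Real.exp_le_exp.mpr
      have hab1 : 1 ≤ (n.natAbs : ℝ) := by
        exact_mod_cast Nat.one_le_iff_ne_zero.mpr (Int.natAbs_ne_zero.mpr hn)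
      have hab2 : ((n.natAbs : ℝ)) ^ 2 = (n:ℝ) ^ 2 := by
        rw [Nat.cast_natAbs, Int.cast_abs, _root_.sq_abs]
      have h4 : (n.natAbs:ℝ) ≤ (n:ℝ)^2 := by nlinarith [hab1, hab2]
      have h5 : (n.natAbs:ℝ) ≤ (n:ℝ)^2 * τ.im := by nlinarith [sq_nonneg ((n:ℝ))]
      nlinarith [mul_le_mul_of_nonneg_left h5 pi_pos.le]
  have hsumm : Summable fun n : ℤ => ‖jacobiTheta₂_term n z τ - if n = 0 then 1 else 0‖ :=
    hcsum.summable.of_nonneg_of_le (fun n => norm_nonneg _) hbound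
  have hnorm : ‖jacobiTheta₂ z τ - 1‖ ≤ (1 - r)⁻¹ + r * (1 - r)⁻¹ - 1 := by
    calc ‖jacobiTheta₂ z τ - 1‖ = ‖∑' n : ℤ, (jacobiTheta₂_term n z τ - if n = 0 then 1 else 0)‖ := by
          rw [hf.tsum_eq]
      _ ≤ ∑' n : ℤ, ‖jacobiTheta₂_term n z τ - if n = 0 then 1 else 0‖ :=
          norm_tsum_le_tsum_norm hsumm
      _ ≤ ∑' n : ℤ, c n := Summable.tsum_le_tsum hbound hsumm hcsum.summable
      _ = _ := hcsum.tsum_eq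
  have hrlt : r < 1/3 := by
    have h3 : (3:ℝ) < rexp π := by
      have := Real.add_one_le_exp (3:ℝ)
      have hπ := Real.exp_le_exp.mpr Real.pi_gt_three.le
      linarith
    rw [hrdef, Real.exp_neg, one_div]
    exact (inv_lt_inv₀ (Real.exp_pos _) (by norm_num)).mpr h3
  have hlt : (1 - r)⁻¹ + r * (1 - r)⁻¹ - 1 < 1 := by
    have h3 : 0 < 1 - r := by linarith
    have he : (1 - r)⁻¹ + r * (1 - r)⁻¹ = (1 + r) / (1 - r) := by field_simp
    rw [he, sub_lt_iff_lt_add, div_lt_iff₀ h3]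
    linarith
  intro h0
  rw [h0] at hnorm
  simp only [zero_sub, norm_neg, norm_one] at hnorm
  linarith



noncomputable def gg (n : ℤ) : ℂ := cexp (π * I * n)

lemma gg_ne_zero (n : ℤ) : gg n ≠ 0 := Complex.exp_ne_zero _

lemma gg_mul (a b : ℤ) : gg a * gg b = gg (a + b) := by
  unfold gg; rw [← Complex.exp_add]; congr 1; push_cast; ring

lemma gg_even {n : ℤ} (h : Even n) : gg n = 1 := by
  obtain ⟨k, hk⟩ := h
  unfold gg
  rw [hk]
  have : (π:ℂ) * I * ((k:ℤ) + (k:ℤ) : ℤ) = (k:ℤ) * (2 * π * I) := by push_cast; ring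
  rw [this, Complex.exp_int_mul_two_pi_mul_I]

lemma gg_odd {n : ℤ} (h : Odd n) : gg n = -1 := by
  obtain ⟨k, hk⟩ := h
  unfold gg
  rw [hk]
  have : (π:ℂ) * I * ((2 * k + 1 : ℤ) : ℂ) = (k:ℤ) * (2 * π * I) + π * I := by push_cast; ring
  rw [this, Complex.exp_add, Complex.exp_int_mul_two_pi_mul_I, one_mul, Complex.exp_pi_mul_I]

lemma gg_eq_of_even {a b : ℤ} (h : Even (a + b)) : gg a = gg b := by
  have h1 : gg a * gg b = 1 := by rw [gg_mul]; exact gg_even h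
  have h2 : gg b * gg b = 1 := by rw [gg_mul]; exact gg_even ⟨b, rfl⟩
  exact mul_right_cancel₀ (gg_ne_zero b) (h1.trans h2.symm)

lemma gg_eq_neg_of_odd {a b : ℤ} (h : ¬ Even (a + b)) : gg a = - gg b := by
  have h1 : gg a * gg b = 1 * (-1) := by
    rw [gg_mul, one_mul]; exact gg_odd (Int.not_even_iff_odd.mp h)
  have h2 : gg b * gg b = 1 := by rw [gg_mul]; exact gg_even ⟨b, rfl⟩
  have h3 : gg a * gg b = (- gg b) * gg b := by rw [h1, neg_mul, h2]; ring
  exact mul_right_cancel₀ (gg_ne_zero b) h3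

lemma term_eq (a b : ℤ) (τ : ℂ) :
    jacobiTheta₂_term a 0 τ * jacobiTheta₂_term b (1/2) τ
      = gg b * cexp (π * I * (a^2 + b^2) * τ) := by
  simp only [jacobiTheta₂_term, gg, ← Complex.exp_add]
  congr 1
  push_cast
  ring

lemma term_eq2 (m n : ℤ) (τ : ℂ) :
    jacobiTheta₂_term m (1/2) (2*τ) * jacobiTheta₂_term n (1/2) (2*τ)
      = gg (m + n) * cexp (π * I * ((m+n)^2 + (m-n)^2) * τ) := by
  simp only [jacobiTheta₂_term, gg, ← Complex.exp_add]
  congr 1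
  push_cast
  ring

set_option maxHeartbeats 2000000 in
lemma theta_key {τ : ℂ} (hτ : 0 < τ.im) :
    jacobiTheta₂ 0 τ * jacobiTheta₂ (1/2) τ = jacobiTheta₂ (1/2) (2*τ) ^ 2 := by
  have h2τ : 0 < (2*τ).im := by simp [hτ]
  have snorm : ∀ (z τ' : ℂ), 0 < τ'.im → Summable fun n : ℤ => ‖jacobiTheta₂_term n z τ'‖ :=
    fun z τ' h => summable_norm_iff.mpr ((summable_jacobiTheta₂_term_iff z τ').mpr h)
  have s1 : Summable fun p : ℤ × ℤ => jacobiTheta₂_term p.1 0 τ * jacobiTheta₂_term p.2 (1/2) τ :=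
    summable_mul_of_summable_norm (f := fun n : ℤ => jacobiTheta₂_term n 0 τ)
      (g := fun n : ℤ => jacobiTheta₂_term n (1/2) τ) (snorm 0 τ hτ) (snorm (1/2) τ hτ)
  have s2 : Summable fun p : ℤ × ℤ =>
      jacobiTheta₂_term p.1 (1/2) (2*τ) * jacobiTheta₂_term p.2 (1/2) (2*τ) :=
    summable_mul_of_summable_norm (f := fun n : ℤ => jacobiTheta₂_term n (1/2) (2*τ))
      (g := fun n : ℤ => jacobiTheta₂_term n (1/2) (2*τ)) (snorm (1/2) _ h2τ) (snorm (1/2) _ h2τ)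
  have hF := (hasSum_jacobiTheta₂_term 0 hτ).mul (hasSum_jacobiTheta₂_term (1/2) hτ) s1
  have hH := (hasSum_jacobiTheta₂_term (1/2) h2τ).mul (hasSum_jacobiTheta₂_term (1/2) h2τ) s2
  set F : ℤ × ℤ → ℂ := fun p => jacobiTheta₂_term p.1 0 τ * jacobiTheta₂_term p.2 (1/2) τ
    with hFdef
  set E : ℤ × ℤ → ℂ := fun p => if Even (p.1 + p.2) then F p else 0 with hEdef
  -- swap symmetry
  have hswap : ∀ p : ℤ × ℤ, F p + F p.swap = 2 * E p := by
    rintro ⟨a, b⟩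
    simp only [hFdef, hEdef, Prod.swap_prod_mk, term_eq]
    by_cases h : Even (a + b)
    · rw [if_pos h, gg_eq_of_even (by rwa [add_comm] : Even (b + a)),
        show (b:ℂ)^2 + (a:ℂ)^2 = (a:ℂ)^2 + (b:ℂ)^2 by ring]
      ring
    · rw [if_neg h, gg_eq_neg_of_odd (a := b) (b := a) (by rwa [add_comm]),
        show (b:ℂ)^2 + (a:ℂ)^2 = (a:ℂ)^2 + (b:ℂ)^2 by ring]
      ring
  have hFs : Summable F := s1
  have hFswap : Summable (fun p : ℤ × ℤ => F p.swap) :=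
    (Equiv.prodComm ℤ ℤ).summable_iff.mpr hFs
  have htsum_swap : ∑' p : ℤ × ℤ, F p.swap = ∑' p, F p := (Equiv.prodComm ℤ ℤ).tsum_eq F
  have hEs : Summable E := by
    have := (hFs.add hFswap).div_const 2
    refine this.congr fun p => ?_
    rw [hswap p]
    ring
  have step1 : ∑' p, F p = ∑' p, E p := by
    have h1 : ∑' p, F p + ∑' p, F p = 2 * ∑' p, E p := by
      calc ∑' p, F p + ∑' p, F p = ∑' p, F p + ∑' p : ℤ × ℤ, F p.swap := by rw [htsum_swap]
        _ = ∑' p : ℤ × ℤ, (F p + F p.swap) := (Summable.tsum_add hFs hFswap).symm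
        _ = ∑' p, 2 * E p := by exact tsum_congr hswap
        _ = 2 * ∑' p, E p := tsum_mul_left
    have := h1
    ring_nf at this
    linear_combination this / 2 * 1
  -- Step 2: reindex by φ
  have hinj : Function.Injective (fun q : ℤ × ℤ => (q.1 + q.2, q.1 - q.2)) := by
    rintro ⟨m, n⟩ ⟨m', n'⟩ h
    simp only [Prod.mk.injEq] at h ⊢
    omega
  have step2 : ∑' q : ℤ × ℤ, E (q.1 + q.2, q.1 - q.2) = ∑' p, E p := by
    refine Function.Injective.tsum_eq hinj fun p hp => ?_
    rcases p with ⟨a, b⟩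
    have hne := Function.mem_support.mp hp
    have hev : Even (a + b) := by
      by_contra hodd
      exact hne (by simp only [hEdef]; rw [if_neg hodd])
    obtain ⟨k, hk⟩ := hev
    exact ⟨(k, a - k), by simp only [Prod.mk.injEq]; omega⟩
  have step3 : ∀ q : ℤ × ℤ, E (q.1 + q.2, q.1 - q.2)
      = jacobiTheta₂_term q.1 (1/2) (2*τ) * jacobiTheta₂_term q.2 (1/2) (2*τ) := by
    rintro ⟨m, n⟩
    simp only [hEdef, hFdef]
    have hev : Even ((m + n) + (m - n)) := ⟨m, by ring⟩
    rw [if_pos hev, term_eq, term_eq2,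
      gg_eq_of_even (a := m - n) (b := m + n) (⟨m, by ring⟩ : Even ((m - n) + (m + n)))]
    congr 2
    push_cast
    ring
  calc jacobiTheta₂ 0 τ * jacobiTheta₂ (1/2) τ = ∑' p, F p := hF.tsum_eq.symm
    _ = ∑' p, E p := step1
    _ = ∑' q : ℤ × ℤ, E (q.1 + q.2, q.1 - q.2) := step2.symm
    _ = ∑' q : ℤ × ℤ, jacobiTheta₂_term q.1 (1/2) (2*τ) * jacobiTheta₂_term q.2 (1/2) (2*τ) :=
        tsum_congr step3
    _ = jacobiTheta₂ (1/2) (2*τ) ^ 2 := by rw [hH.tsum_eq, sq]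

lemma both_ne (n : ℕ) : ∀ τ : ℂ, 0 < τ.im → 1 ≤ 2^n * τ.im →
    jacobiTheta₂ 0 τ ≠ 0 ∧ jacobiTheta₂ (1/2) τ ≠ 0 := by
  induction n with
  | zero =>
    intro τ h h1
    rw [pow_zero, one_mul] at h1
    constructor
    · exact near_one (by simp) h1
    · exact near_one (by simp [Complex.div_im]) h1
  | succ n ih =>
    intro τ h h1
    have h2 : (2*τ).im = 2 * τ.im := by simp
    have h3 : 0 < (2*τ).im := by rw [h2]; linarith
    have h4 : 1 ≤ 2^n * (2*τ).im := by rw [h2]; rw [pow_succ] at h1; linarith [h1]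
    have h5 := (ih (2*τ) h3 h4).2
    have h6 := theta_key h
    have h7 : jacobiTheta₂ 0 τ * jacobiTheta₂ (1/2) τ ≠ 0 := by
      rw [h6]; exact pow_ne_zero _ h5
    exact ⟨left_ne_zero_of_mul h7, right_ne_zero_of_mul h7⟩

lemma theta34_ne {τ : ℂ} (h : 0 < τ.im) :
    jacobiTheta₂ 0 τ ≠ 0 ∧ jacobiTheta₂ (1/2) τ ≠ 0 := by
  obtain ⟨n, hn⟩ := pow_unbounded_of_one_lt (τ.im)⁻¹ (one_lt_two (α := ℝ))
  refine both_ne n τ h ?_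
  rw [← inv_mul_cancel₀ h.ne']
  exact mul_le_mul_of_nonneg_right hn.le h.le

lemma theta2_ne {τ : ℂ} (h : 0 < τ.im) : jacobiTheta₂ (τ/2) τ ≠ 0 := by
  have hτ0 : τ ≠ 0 := fun hh => by simp [hh] at h
  have him : 0 < (-1/τ).im := by
    rw [div_eq_mul_inv, neg_one_mul, neg_im, inv_im, neg_div, neg_neg]
    exact div_pos h (normSq_pos.mpr hτ0)
  rw [jacobiTheta₂_functional_equation (τ/2) τ, show τ/2/τ = 1/2 by rw [div_div, mul_comm, ← div_div, div_self hτ0]]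
  refine mul_ne_zero (mul_ne_zero ?_ (Complex.exp_ne_zero _)) (theta34_ne him).2
  refine one_div_ne_zero fun hc => ?_
  rcases (Complex.cpow_eq_zero_iff _ _).mp hc with ⟨h0, -⟩
  exact mul_ne_zero (neg_ne_zero.mpr I_ne_zero) hτ0 h0


/-- for every τ in the upper half plane, the theta constants θ01(0,τ) and
θ10(0,τ) are nonzero; equivalently `jacobiTheta₂ (1/2) τ ≠ 0` and `jacobiTheta₂ (τ/2) τ ≠ 0`. -/
theorem theta_constants_ne_zero (τ : UpperHalfPlane) :
    thetaChar 0 (1 / 2) 0 (τ : ℂ) ≠ 0 ∧ thetaChar (1 / 2) 0 0 (τ : ℂ) ≠ 0 ∧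
      jacobiTheta₂ (1 / 2) (τ : ℂ) ≠ 0 ∧ jacobiTheta₂ ((τ : ℂ) / 2) (τ : ℂ) ≠ 0 := by
  have h : 0 < (τ : ℂ).im := τ.im_pos
  have h4 := (theta34_ne h).2
  have h2 := theta2_ne h
  refine ⟨?_, ?_, h4, h2⟩
  · have : thetaChar 0 (1/2) 0 (τ : ℂ) = jacobiTheta₂ (1/2) (τ : ℂ) := by
      simp [thetaChar]
    rw [this]; exact h4
  · have : thetaChar (1/2) 0 0 (τ : ℂ) =
        cexp (π * I * (1/2:ℂ)^2 * τ) * jacobiTheta₂ ((τ:ℂ)/2) (τ:ℂ) := by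
      simp [thetaChar]
      norm_num
      rw [show ((τ:ℂ))/2 = (1/2 : ℂ) * τ by ring]
    rw [this]
    exact mul_ne_zero (Complex.exp_ne_zero _) h2
end

section
/- For every τ in the upper half plane ℍ (so that −1/τ ∈ ℍ as well), the function λ(τ) = −θ01(0,τ)⁴ / θ10(0,τ)⁴ satisfies λ(−1/τ) = 1/λ(τ). -/
open Complex

/-- `λ(τ) = −θ01(0,τ)⁴ / θ10(0,τ)⁴`. -/
noncomputable def lambdaFun (τ : ℂ) : ℂ :=
  -(thetaChar 0 (1 / 2) 0 τ) ^ 4 / (thetaChar (1 / 2) 0 0 τ) ^ 4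

/-- for every τ in the upper half plane, `λ(−1/τ) = 1/λ(τ)`. -/
theorem lambdaFun_S_action (τ : UpperHalfPlane) :
    lambdaFun (-1 / (τ : ℂ)) = 1 / lambdaFun (τ : ℂ) := by
  set t : ℂ := (τ : ℂ) with ht
  have ht0 : t ≠ 0 := τ.ne_zero
  have hd : (-I * t) ^ (1/2 : ℂ) ≠ 0 := by
    rw [Ne, cpow_eq_zero_iff]
    simp [I_ne_zero, ht0]
  set D : ℂ := ((-I * t) ^ (1/2 : ℂ))⁻¹ with hD
  have hDne : D ≠ 0 := inv_ne_zero hd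
  have E1 := jacobiTheta₂_functional_equation (t/2) t
  have E2 := jacobiTheta₂_functional_equation (1/2) t
  have h1 : (t/2)/t = 1/2 := by field_simp
  have h2 : -↑Real.pi * I * (t/2)^2 / t = -(Real.pi * I * (1/4) * t) := by
    field_simp; ring
  have h3 : -↑Real.pi * I * (1/2:ℂ)^2 / t = -(Real.pi * I / (4*t)) := by
    field_simp; norm_num
  rw [h1, h2] at E1
  rw [h3] at E2
  rw [show (1:ℂ)/((-I*t)^(1/2:ℂ)) = D by rw [hD, one_div]] at E1 E2
  -- solve for the thetas at -1/t
  have hA' : jacobiTheta₂ (1/2) (-1/t) =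
      D⁻¹ * cexp (Real.pi * I * (1/4) * t) * jacobiTheta₂ (t/2) t := by
    rw [E1, Complex.exp_neg]
    field_simp
  have hB' : jacobiTheta₂ (1/(2*t)) (-1/t) =
      D⁻¹ * cexp (Real.pi * I / (4*t)) * jacobiTheta₂ (1/2) t := by
    have : (1:ℂ)/2/t = 1/(2*t) := by field_simp
    rw [this] at E2
    rw [E2, Complex.exp_neg]
    field_simp
  -- unfold
  simp only [lambdaFun, thetaChar]
  push_cast
  norm_num
  rw [show (1/2:ℂ)*t = t/2 by ring, show (1/2:ℂ)*(-1/t) = -(1/(2*t)) by ring,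
    jacobiTheta₂_neg_left,
    show cexp (Real.pi * I * (1/4) * (-1/t)) = (cexp (Real.pi * I / (4*t)))⁻¹ by
      rw [← Complex.exp_neg]; congr 1; field_simp,
    hA', hB']
  have hG : cexp (Real.pi * I / (4*t)) ≠ 0 := Complex.exp_ne_zero _
  have hDi : D⁻¹ ≠ 0 := inv_ne_zero hDne
  set X := jacobiTheta₂ (1/2) t
  set Y := jacobiTheta₂ (t/2) t
  set E := cexp (Real.pi * I * (1/4) * t)
  set G := cexp (Real.pi * I / (4*t))
  rcases eq_or_ne X 0 with hX | hX
  · simp [hX]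
  · field_simp
end

section
/- For every τ in the upper half plane ℍ and every matrix γ = [[a,b],[c,d]] ∈ SL(2,ℤ) with ab ≡ 0 (mod 2) and cd ≡ 0 (mod 2), the function k(τ) = −(θ10(0,τ)⁸ + θ01(0,τ)⁸)/(θ10(0,τ)⁴ · θ01(0,τ)⁴) satisfies k((aτ+b)/(cτ+d)) = k(τ). Equivalently, the set {λ(τ), 1/λ(τ)}, where λ(τ) = −θ01(0,τ)⁴/θ10(0,τ)⁴, is invariant under the action of the group Γ_{1,2}. -/
open Complex Real

/-- `k(τ) = −(θ10(0,τ)⁸ + θ01(0,τ)⁸)/(θ10(0,τ)⁴ · θ01(0,τ)⁴)`. -/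
noncomputable def kFun (τ : ℂ) : ℂ :=
  -((thetaChar (1 / 2) 0 0 τ) ^ 8 + (thetaChar 0 (1 / 2) 0 τ) ^ 8) /
    ((thetaChar (1 / 2) 0 0 τ) ^ 4 * (thetaChar 0 (1 / 2) 0 τ) ^ 4)

lemma t10_eq (τ : ℂ) : thetaChar (1/2) 0 0 τ = cexp ((π : ℂ) * I * τ / 4) * jacobiTheta₂ (τ/2) τ := by
  unfold thetaChar
  push_cast
  norm_num
  ring_nf

lemma t01_eq (τ : ℂ) : thetaChar 0 (1/2) 0 τ = jacobiTheta₂ (1/2) τ := by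
  unfold thetaChar
  push_cast
  norm_num

lemma X_eq (τ : ℂ) : (thetaChar (1/2) 0 0 τ)^4 = cexp ((π : ℂ) * I * τ) * (jacobiTheta₂ (τ/2) τ)^4 := by
  rw [t10_eq, mul_pow, ← Complex.exp_nat_mul]
  norm_num
  ring_nf
  tauto

lemma X_add_two (τ : ℂ) : (thetaChar (1/2) 0 0 (τ+2))^4 = (thetaChar (1/2) 0 0 τ)^4 := by
  rw [X_eq, X_eq]
  have h1 : (τ + 2)/2 = τ/2 + 1 := by ring
  rw [h1, jacobiTheta₂_add_right, jacobiTheta₂_add_left]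
  rw [mul_add, Complex.exp_add]
  have : cexp ((π : ℂ) * I * 2) = 1 := by
    rw [show (π : ℂ) * I * 2 = 2 * π * I by ring, Complex.exp_two_pi_mul_I]
  rw [this, mul_one]

lemma Y_add_two (τ : ℂ) : thetaChar 0 (1/2) 0 (τ+2) = thetaChar 0 (1/2) 0 τ := by
  rw [t01_eq, t01_eq, jacobiTheta₂_add_right]

lemma kFun_eq (τ : ℂ) : kFun τ =
    -(((thetaChar (1/2) 0 0 τ)^4)^2 + ((thetaChar 0 (1/2) 0 τ)^4)^2) /
      ((thetaChar (1/2) 0 0 τ)^4 * (thetaChar 0 (1/2) 0 τ)^4) := by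
  unfold kFun
  norm_num [← pow_mul]

lemma kFun_add_two (τ : ℂ) : kFun (τ + 2) = kFun τ := by
  rw [kFun_eq, kFun_eq, X_add_two, Y_add_two]

lemma kFun_add_even (m : ℤ) (τ : ℂ) : kFun (τ + 2*m) = kFun τ := by
  induction m using Int.induction_on with
  | zero => simp
  | succ k ih =>
      push_cast at ih ⊢
      rw [show τ + 2*((k:ℂ)+1) = (τ + 2*(k:ℂ)) + 2 by ring, kFun_add_two, ih]
  | pred k ih =>
      push_cast at ih ⊢
      have h2 := kFun_add_two (τ + 2*(-(k:ℂ)-1))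
      rw [show τ + 2*(-(k:ℂ)-1) + 2 = τ + 2 * -(k:ℂ) by ring] at h2
      rw [← h2]
      exact ih
lemma hc0' (τ : ℂ) (hτ : τ ≠ 0) : (-I*τ)^(1/2:ℂ) ≠ 0 := by
  intro h
  rw [Complex.cpow_eq_zero_iff] at h
  exact (mul_ne_zero (neg_ne_zero.mpr I_ne_zero) hτ) h.1

lemma theta_b (τ : ℂ) (hτ : τ ≠ 0) :
    jacobiTheta₂ (1/2) (-1/τ) = (-I*τ)^(1/2:ℂ) * cexp ((π:ℂ)*I*τ/4) * jacobiTheta₂ (τ/2) τ := by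
  have key := jacobiTheta₂_functional_equation (τ/2) τ
  rw [show (τ/2)/τ = 1/2 by rw [div_div, mul_comm]; field_simp] at key
  rw [show -(π:ℂ)*I*(τ/2)^2/τ = -((π:ℂ)*I*τ/4) by
    field_simp
    ring] at key
  rw [key]
  have h0 := hc0' τ hτ
  have he : cexp ((π:ℂ)*I*τ/4) * cexp (-((π:ℂ)*I*τ/4)) = 1 := by
    rw [← Complex.exp_add]; simp
  set c := (-I*τ)^(1/2:ℂ)
  set e := cexp ((π:ℂ)*I*τ/4)
  set e' := cexp (-((π:ℂ)*I*τ/4))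
  set A := jacobiTheta₂ (1/2) (-1/τ)
  rw [show c * e * (1/c * e' * A) = (c * c⁻¹) * ((e * e') * A) by ring,
    mul_inv_cancel₀ h0, he, one_mul, one_mul]

lemma theta_a (τ : ℂ) (hτ : τ ≠ 0) :
    jacobiTheta₂ (1/(2*τ)) (-1/τ) = (-I*τ)^(1/2:ℂ) * cexp ((π:ℂ)*I/(4*τ)) * jacobiTheta₂ (1/2) τ := by
  have key := jacobiTheta₂_functional_equation (1/2) τ
  rw [show ((1:ℂ)/2)/τ = 1/(2*τ) by rw [div_div]] at key
  rw [show -(π:ℂ)*I*((1:ℂ)/2)^2/τ = -((π:ℂ)*I/(4*τ)) by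
    rw [neg_mul, neg_mul, neg_div, neg_inj,
      div_eq_div_iff hτ (mul_ne_zero (by norm_num) hτ)]
    ring] at key
  rw [key]
  have h0 := hc0' τ hτ
  have he : cexp ((π:ℂ)*I/(4*τ)) * cexp (-((π:ℂ)*I/(4*τ))) = 1 := by
    rw [← Complex.exp_add]; simp
  set c := (-I*τ)^(1/2:ℂ)
  set e := cexp ((π:ℂ)*I/(4*τ))
  set e' := cexp (-((π:ℂ)*I/(4*τ)))
  set A := jacobiTheta₂ (1/(2*τ)) (-1/τ)
  rw [show c * e * (1/c * e' * A) = (c * c⁻¹) * ((e * e') * A) by ring,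
    mul_inv_cancel₀ h0, he, one_mul, one_mul]

lemma Y_S (τ : ℂ) (hτ : τ ≠ 0) :
    (thetaChar 0 (1/2) 0 (-1/τ))^4 =
      ((-I*τ)^(1/2:ℂ))^4 * (thetaChar (1/2) 0 0 τ)^4 := by
  rw [t01_eq, theta_b τ hτ, X_eq, mul_pow, mul_pow, ← Complex.exp_nat_mul,
    show ((4:ℕ):ℂ) * ((π:ℂ)*I*τ/4) = (π:ℂ)*I*τ by push_cast; ring]
  ring

lemma X_S (τ : ℂ) (hτ : τ ≠ 0) :
    (thetaChar (1/2) 0 0 (-1/τ))^4 =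
      ((-I*τ)^(1/2:ℂ))^4 * (thetaChar 0 (1/2) 0 τ)^4 := by
  rw [X_eq, show (-1/τ)/2 = -(1/(2*τ)) by ring, jacobiTheta₂_neg_left, theta_a τ hτ,
    t01_eq, mul_pow, mul_pow, ← Complex.exp_nat_mul]
  have he : cexp ((π:ℂ) * I * (-1/τ)) * cexp (((4:ℕ):ℂ) * ((π:ℂ)*I/(4*τ))) = 1 := by
    rw [← Complex.exp_add, show (π:ℂ) * I * (-1/τ) + ((4:ℕ):ℂ) * ((π:ℂ)*I/(4*τ)) = 0 by
      push_cast; field_simp; ring]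
    exact Complex.exp_zero
  linear_combination (((-I*τ)^(1/2:ℂ))^4 * (jacobiTheta₂ (1/2) τ)^4) * he

lemma kFun_S (τ : ℂ) (hτ : τ ≠ 0) : kFun (-1/τ) = kFun τ := by
  have hu : ((-I*τ)^(1/2:ℂ))^4 ≠ 0 := pow_ne_zero _ (hc0' τ hτ)
  set u := ((-I*τ)^(1/2:ℂ))^4 with hu_def
  have hu2 : u^2 ≠ 0 := pow_ne_zero _ hu
  rw [kFun_eq, kFun_eq, X_S τ hτ, Y_S τ hτ]
  set X := (thetaChar (1/2) 0 0 τ)^4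
  set Y := (thetaChar 0 (1/2) 0 τ)^4
  rw [show -((u*Y)^2 + (u*X)^2) = u^2 * (-(X^2 + Y^2)) by ring,
    show (u*Y) * (u*X) = u^2 * (X*Y) by ring,
    mul_div_mul_left _ _ hu2]


lemma im_neg_inv (τ : ℂ) (hτ : 0 < τ.im) : 0 < (-1/τ).im := by
  have h0 : τ ≠ 0 := fun h => by simp [h] at hτ
  rw [neg_div, neg_im, one_div, inv_im, neg_div, neg_neg]
  exact div_pos hτ (normSq_pos.mpr h0)

lemma main_aux : ∀ N M : ℕ, ∀ a b c d : ℤ, c.natAbs < N → d.natAbs < M →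
    a*d - b*c = 1 → a*b % 2 = 0 → c*d % 2 = 0 → ∀ τ : ℂ, 0 < τ.im →
    kFun (((a:ℂ)*τ + b)/((c:ℂ)*τ + d)) = kFun τ := by
  intro N
  induction N with
  | zero => intro M a b c d hc; omega
  | succ N ihN =>
    intro M
    induction M with
    | zero => intro a b c d hc hd; omega
    | succ M ihM =>
      intro a b c d hc hd hdet hab hcd τ hτ
      have hτ0 : τ ≠ 0 := fun h => by simp [h] at hτ
      by_cases hc0 : c = 0
      · subst hc0
        have had : a * d = 1 := by linear_combination hdet
        obtain ⟨m, hm⟩ : ∃ m : ℤ, b = 2*m := by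
          rcases Int.eq_one_or_neg_one_of_mul_eq_one' had with ⟨ha, _⟩ | ⟨ha, _⟩ <;>
            subst ha <;> [exact ⟨b/2, by omega⟩; exact ⟨b/2, by omega⟩]
        subst hm
        rcases Int.eq_one_or_neg_one_of_mul_eq_one' had with ⟨ha, hd1⟩ | ⟨ha, hd1⟩ <;>
          subst ha <;> subst hd1
        · rw [show ((1:ℤ):ℂ)*τ + ((2*m:ℤ):ℂ) = τ + 2*m by push_cast; ring,
            show ((0:ℤ):ℂ)*τ + ((1:ℤ):ℂ) = 1 by push_cast; ring, div_one]
          exact kFun_add_even m τ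
        · rw [show (((-1:ℤ)):ℂ)*τ + ((2*m:ℤ):ℂ) = -(τ + 2*(-m:ℤ)) by push_cast; ring,
            show ((0:ℤ):ℂ)*τ + (((-1:ℤ)):ℂ) = -1 by push_cast; ring]
          rw [show -(τ + 2*((-m:ℤ):ℂ))/(-1) = τ + 2*((-m:ℤ):ℂ) by ring]
          exact kFun_add_even (-m) τ
      · by_cases hsm : d.natAbs < c.natAbs
        · -- S step
          have hτ' : 0 < (-1/τ).im := im_neg_inv τ hτ
          have harg : ((a:ℂ)*τ + b)/((c:ℂ)*τ + d) =
              (((-b : ℤ):ℂ)*(-1/τ) + ((a:ℤ):ℂ))/(((-d : ℤ):ℂ)*(-1/τ) + ((c:ℤ):ℂ)) := by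
            push_cast
            rw [show (-(b:ℂ))*(-1/τ) + a = ((a:ℂ)*τ + b)/τ by field_simp; ring,
                show (-(d:ℂ))*(-1/τ) + c = ((c:ℂ)*τ + d)/τ by field_simp; ring,
                div_div_div_cancel_right₀ hτ0]
          rw [harg, ihN (c.natAbs + 1) (-b) a (-d) c (by omega) (by omega)
              (by linear_combination hdet)
              (by obtain ⟨k, hk⟩ := Int.dvd_of_emod_eq_zero hab
                  rw [show (-b)*a = 2*(-k) by linear_combination -hk]
                  exact Int.mul_emod_right 2 (-k))
              (by obtain ⟨k, hk⟩ := Int.dvd_of_emod_eq_zero hcd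
                  rw [show (-d)*c = 2*(-k) by linear_combination -hk]
                  exact Int.mul_emod_right 2 (-k))
              (-1/τ) hτ']
          exact kFun_S τ hτ0
        · -- T² step
          have hne : c.natAbs ≠ d.natAbs := by
            intro h
            have hdc : d = c ∨ d = -c := by omega
            have hcd1 : c * d = 1 ∨ c * d = -1 := by
              rcases hdc with h' | h'
              · have h1 : c * (a - b) = 1 := by linear_combination hdet - a * h'
                left
                rcases Int.eq_one_or_neg_one_of_mul_eq_one' h1 with ⟨h2, _⟩ | ⟨h2, _⟩ <;>
                  rw [h', h2] <;> norm_num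
              · have h1 : c * (-a - b) = 1 := by linear_combination hdet - a * h'
                right
                rcases Int.eq_one_or_neg_one_of_mul_eq_one' h1 with ⟨h2, _⟩ | ⟨h2, _⟩ <;>
                  rw [h', h2] <;> norm_num
            rcases hcd1 with h1 | h1 <;> rw [h1] at hcd <;> norm_num at hcd
          obtain ⟨s, hs, hdec⟩ : ∃ s : ℤ, (s = 1 ∨ s = -1) ∧ (d - 2*s*c).natAbs < d.natAbs := by
            by_cases hcpos : 0 < c <;> by_cases hdpos : 0 < d
            · exact ⟨1, Or.inl rfl, by omega⟩
            · exact ⟨-1, Or.inr rfl, by omega⟩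
            · exact ⟨-1, Or.inr rfl, by omega⟩
            · exact ⟨1, Or.inl rfl, by omega⟩
          have harg : ((a:ℂ)*τ + b)/((c:ℂ)*τ + d) =
              ((a:ℂ)*(τ + 2*(s:ℂ)) + ((b - 2*s*a : ℤ):ℂ))/((c:ℂ)*(τ + 2*(s:ℂ)) + ((d - 2*s*c : ℤ):ℂ)) := by
            congr 1 <;> push_cast <;> ring
          have hτ2 : 0 < (τ + 2*(s:ℂ)).im := by
            have : (τ + 2*(s:ℂ)).im = τ.im := by simp
            rw [this]; exact hτ
          rw [harg, ihM a (b - 2*s*a) c (d - 2*s*c) hc (by omega)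
              (by linear_combination hdet)
              (by obtain ⟨k, hk⟩ := Int.dvd_of_emod_eq_zero hab
                  rw [show a*(b - 2*s*a) = 2*(k - s*a*a) by linear_combination hk]
                  exact Int.mul_emod_right _ _)
              (by obtain ⟨k, hk⟩ := Int.dvd_of_emod_eq_zero hcd
                  rw [show c*(d - 2*s*c) = 2*(k - s*c*c) by linear_combination hk]
                  exact Int.mul_emod_right _ _)
              (τ + 2*(s:ℂ)) hτ2]
          exact kFun_add_even s τ


/-- `k` is invariant under the action of Γ_{1,2} ⊂ SL(2,ℤ) on the upper half
plane: for γ = [[a,b],[c,d]] ∈ SL(2,ℤ) with ab ≡ 0 and cd ≡ 0 (mod 2),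
`k((aτ+b)/(cτ+d)) = k(τ)`. -/
theorem kFun_Gamma12_invariant (τ : UpperHalfPlane)
    (γ : Matrix.SpecialLinearGroup (Fin 2) ℤ)
    (hab : γ 0 0 * γ 0 1 % 2 = 0) (hcd : γ 1 0 * γ 1 1 % 2 = 0) :
    kFun (((γ 0 0 : ℂ) * (τ : ℂ) + (γ 0 1 : ℂ)) / ((γ 1 0 : ℂ) * (τ : ℂ) + (γ 1 1 : ℂ))) =
      kFun (τ : ℂ) := by
  have hdet : (γ 0 0) * (γ 1 1) - (γ 0 1) * (γ 1 0) = 1 := by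
    have h := γ.2
    rw [Matrix.det_fin_two] at h
    exact h
  exact main_aux ((γ 1 0).natAbs + 1) ((γ 1 1).natAbs + 1) (γ 0 0) (γ 0 1) (γ 1 0) (γ 1 1)
    (by omega) (by omega) (by linear_combination hdet) hab hcd (τ : ℂ) τ.2
end

section
/- For every τ in the upper half plane ℍ, the value k(τ) = −(θ10(0,τ)⁸ + θ01(0,τ)⁸)/(θ10(0,τ)⁴ · θ01(0,τ)⁴) is different from 2. -/
open Complex

open Complex Real

section helpers

variable {α β γ : Type*}

lemma hasSum_sum_equiv {M : Type*} [AddCommMonoid M] [TopologicalSpace M] [ContinuousAdd M]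
    (e : α ⊕ β ≃ γ) {h : γ → M} {a b : M}
    (ha : HasSum (fun x => h (e (Sum.inl x))) a)
    (hb : HasSum (fun y => h (e (Sum.inr y))) b) : HasSum h (a + b) := by
  rw [← Equiv.hasSum_iff e]
  have hinl : HasSum (fun x : Set.range (Sum.inl : α → α ⊕ β) => (h ∘ e) x) a :=
    (Function.Injective.hasSum_range_iff (f := h ∘ e) (Sum.inl_injective)).mpr ha
  have hinr : HasSum (fun x : Set.range (Sum.inr : β → α ⊕ β) => (h ∘ e) x) b :=
    (Function.Injective.hasSum_range_iff (f := h ∘ e) (Sum.inr_injective)).mpr hb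
  exact HasSum.add_isCompl Set.isCompl_range_inl_range_inr hinl hinr

lemma hasSum_zero_of_anti {f : α → ℂ} (σ : α ≃ α) (hf : Summable f)
    (h : ∀ x, f (σ x) = -f x) : HasSum f 0 := by
  obtain ⟨a, ha⟩ := hf
  have h1 : HasSum (fun x => f (σ x)) a := (Equiv.hasSum_iff σ).mpr ha
  rw [show (fun x => f (σ x)) = fun x => -f x from funext h] at h1
  have h2 : HasSum (fun x => -f x) (-a) := ha.neg
  have : a = -a := h1.unique h2
  have ha0 : a = 0 := by linear_combination this / 2
  rwa [ha0] at ha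

lemma cexp_eq_cexp (k : ℤ) {x y : ℂ} (h : x = y + k * (2 * (Real.pi : ℂ) * I)) :
    cexp x = cexp y := by
  rw [h, Complex.exp_add, Complex.exp_int_mul_two_pi_mul_I, mul_one]


lemma cexp_eq_neg_cexp (k : ℤ) {x y : ℂ} (h : x = y + (2*(k:ℂ)+1) * ((Real.pi : ℂ) * I)) :
    cexp x = -cexp y := by
  rw [h, Complex.exp_add,
    show ((2*(k:ℂ)+1) * ((Real.pi:ℂ)*I)) = (k:ℂ)*(2*(Real.pi:ℂ)*I) + (Real.pi:ℂ)*I by ring,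
    Complex.exp_add, Complex.exp_int_mul_two_pi_mul_I, one_mul, Complex.exp_pi_mul_I]
  ring

lemma hasSum_prod {f g : ℤ → ℂ} {a b : ℂ} (hf : HasSum f a) (hg : HasSum g b)
    (nf : Summable fun n => ‖f n‖) (ng : Summable fun n => ‖g n‖) :
    HasSum (fun p : ℤ × ℤ => f p.1 * g p.2) (a * b) :=
  hf.mul hg ((nf.mul_norm ng).of_norm)

lemma summable_norm_jt (z : ℂ) {τ : ℂ} (hτ : 0 < im τ) :
    Summable fun n : ℤ => ‖jacobiTheta₂_term n z τ‖ := by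
  refine ((summable_pow_mul_jacobiTheta₂_term_bound |im z| hτ 0).of_nonneg_of_le
    (fun n => norm_nonneg _) (fun n => ?_))
  simpa only [pow_zero, one_mul] using norm_jacobiTheta₂_term_le hτ le_rfl le_rfl n

end helpers

/-- θ₃ theta constant -/
noncomputable def T3 (τ : ℂ) : ℂ := jacobiTheta₂ 0 τ
/-- θ₄ theta constant -/
noncomputable def T4 (τ : ℂ) : ℂ := jacobiTheta₂ (1/2) τ
/-- θ₂ theta constant -/
noncomputable def T2 (τ : ℂ) : ℂ := cexp (Real.pi * I * τ / 4) * jacobiTheta₂ (τ/2) τ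

lemma hasSum_T3 {τ : ℂ} (hτ : 0 < im τ) :
    HasSum (fun n : ℤ => jacobiTheta₂_term n 0 τ) (T3 τ) := hasSum_jacobiTheta₂_term 0 hτ

lemma hasSum_T4 {τ : ℂ} (hτ : 0 < im τ) :
    HasSum (fun n : ℤ => jacobiTheta₂_term n (1/2) τ) (T4 τ) := hasSum_jacobiTheta₂_term _ hτ

lemma hasSum_T2 {τ : ℂ} (hτ : 0 < im τ) :
    HasSum (fun n : ℤ => cexp (Real.pi * I * τ / 4) * jacobiTheta₂_term n (τ/2) τ) (T2 τ) :=
  (hasSum_jacobiTheta₂_term _ hτ).mul_left _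

lemma summable_norm_T2term {τ : ℂ} (hτ : 0 < im τ) :
    Summable fun n : ℤ => ‖cexp (Real.pi * I * τ / 4) * jacobiTheta₂_term n (τ/2) τ‖ := by
  simpa [norm_mul] using (summable_norm_jt (τ/2) hτ).mul_left ‖cexp (Real.pi * I * τ / 4)‖

/-- bijection splitting ℤ² by parity of coordinate sum -/
def φ1 : (ℤ × ℤ) ⊕ (ℤ × ℤ) → ℤ × ℤ :=
  Sum.elim (fun p => (p.1 + p.2, p.1 - p.2)) (fun p => (p.1 + p.2 + 1, p.1 - p.2))

lemma φ1_bij : Function.Bijective φ1 := by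
  constructor
  · rintro (⟨u,v⟩|⟨u,v⟩) (⟨a,b⟩|⟨a,b⟩) h <;>
      simp_all only [φ1, Sum.elim_inl, Sum.elim_inr, Prod.mk.injEq, Sum.inl.injEq,
        Sum.inr.injEq, reduceCtorEq] <;> omega
  · rintro ⟨m, n⟩
    rcases Int.even_or_odd (m + n) with ⟨k, hk⟩ | ⟨k, hk⟩
    · exact ⟨Sum.inl (k, m - k), by simp only [φ1, Sum.elim_inl, Prod.mk.injEq]; omega⟩
    · exact ⟨Sum.inr (k, m - 1 - k), by simp only [φ1, Sum.elim_inr, Prod.mk.injEq]; omega⟩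

/-- bijection splitting ℤ² by parity of coordinate difference -/
def φ2 : (ℤ × ℤ) ⊕ (ℤ × ℤ) → ℤ × ℤ :=
  Sum.elim (fun p => (p.1 + p.2, p.1 - p.2 - 1)) (fun p => (p.1 + p.2, p.1 - p.2))

lemma φ2_bij : Function.Bijective φ2 := by
  constructor
  · rintro (⟨u,v⟩|⟨u,v⟩) (⟨a,b⟩|⟨a,b⟩) h <;>
      simp_all only [φ2, Sum.elim_inl, Sum.elim_inr, Prod.mk.injEq, Sum.inl.injEq,
        Sum.inr.injEq, reduceCtorEq] <;> omega
  · rintro ⟨m, n⟩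
    rcases Int.even_or_odd (m - n) with ⟨k, hk⟩ | ⟨k, hk⟩
    · exact ⟨Sum.inr (m - k, k), by simp only [φ2, Sum.elim_inr, Prod.mk.injEq]; omega⟩
    · exact ⟨Sum.inl (m - k, k), by simp only [φ2, Sum.elim_inl, Prod.mk.injEq]; omega⟩

noncomputable def e1 : (ℤ × ℤ) ⊕ (ℤ × ℤ) ≃ ℤ × ℤ := Equiv.ofBijective φ1 φ1_bij
noncomputable def e2 : (ℤ × ℤ) ⊕ (ℤ × ℤ) ≃ ℤ × ℤ := Equiv.ofBijective φ2 φ2_bij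

lemma im_two_mul {τ : ℂ} (hτ : 0 < im τ) : 0 < im (2 * τ) := by
  simp only [Complex.mul_im, Complex.re_ofNat, Complex.im_ofNat, zero_mul, add_zero]
  linarith

lemma I1 {τ : ℂ} (hτ : 0 < im τ) : T3 τ ^ 2 = T3 (2*τ) ^ 2 + T2 (2*τ) ^ 2 := by
  have h2 := im_two_mul hτ
  have P := hasSum_prod (hasSum_T3 hτ) (hasSum_T3 hτ) (summable_norm_jt 0 hτ) (summable_norm_jt 0 hτ)
  have A := hasSum_prod (hasSum_T3 h2) (hasSum_T3 h2) (summable_norm_jt 0 h2) (summable_norm_jt 0 h2)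
  have B := hasSum_prod (hasSum_T2 h2) (hasSum_T2 h2) (summable_norm_T2term h2) (summable_norm_T2term h2)
  have hA : HasSum (fun x : ℤ × ℤ =>
      (fun p : ℤ × ℤ => jacobiTheta₂_term p.1 0 τ * jacobiTheta₂_term p.2 0 τ) (e1 (Sum.inl x)))
      (T3 (2*τ) * T3 (2*τ)) := by
    have he : (fun x : ℤ × ℤ =>
        (fun p : ℤ × ℤ => jacobiTheta₂_term p.1 0 τ * jacobiTheta₂_term p.2 0 τ) (e1 (Sum.inl x)))
        = fun p : ℤ × ℤ => jacobiTheta₂_term p.1 0 (2*τ) * jacobiTheta₂_term p.2 0 (2*τ) := by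
      funext ⟨u, v⟩
      simp only [e1, Equiv.ofBijective_apply, φ1, Sum.elim_inl, jacobiTheta₂_term,
        ← Complex.exp_add]
      exact cexp_eq_cexp 0 (by push_cast; ring)
    rw [he]; exact A
  have hB : HasSum (fun x : ℤ × ℤ =>
      (fun p : ℤ × ℤ => jacobiTheta₂_term p.1 0 τ * jacobiTheta₂_term p.2 0 τ) (e1 (Sum.inr x)))
      (T2 (2*τ) * T2 (2*τ)) := by
    have he : (fun x : ℤ × ℤ =>
        (fun p : ℤ × ℤ => jacobiTheta₂_term p.1 0 τ * jacobiTheta₂_term p.2 0 τ) (e1 (Sum.inr x)))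
        = fun p : ℤ × ℤ => (cexp (Real.pi * I * (2*τ) / 4) * jacobiTheta₂_term p.1 ((2*τ)/2) (2*τ))
            * (cexp (Real.pi * I * (2*τ) / 4) * jacobiTheta₂_term p.2 ((2*τ)/2) (2*τ)) := by
      funext ⟨u, v⟩
      simp only [e1, Equiv.ofBijective_apply, φ1, Sum.elim_inr, jacobiTheta₂_term,
        ← Complex.exp_add]
      exact cexp_eq_cexp 0 (by push_cast; ring)
    rw [he]; exact B
  have := P.unique (hasSum_sum_equiv e1 hA hB)
  linear_combination this

lemma I2 {τ : ℂ} (hτ : 0 < im τ) : T4 τ ^ 2 = T3 (2*τ) ^ 2 - T2 (2*τ) ^ 2 := by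
  have h2 := im_two_mul hτ
  have P := hasSum_prod (hasSum_T4 hτ) (hasSum_T4 hτ) (summable_norm_jt _ hτ) (summable_norm_jt _ hτ)
  have A := hasSum_prod (hasSum_T3 h2) (hasSum_T3 h2) (summable_norm_jt 0 h2) (summable_norm_jt 0 h2)
  have B := (hasSum_prod (hasSum_T2 h2) (hasSum_T2 h2) (summable_norm_T2term h2) (summable_norm_T2term h2)).neg
  have hA : HasSum (fun x : ℤ × ℤ =>
      (fun p : ℤ × ℤ => jacobiTheta₂_term p.1 (1/2) τ * jacobiTheta₂_term p.2 (1/2) τ) (e1 (Sum.inl x)))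
      (T3 (2*τ) * T3 (2*τ)) := by
    have he : (fun x : ℤ × ℤ =>
        (fun p : ℤ × ℤ => jacobiTheta₂_term p.1 (1/2) τ * jacobiTheta₂_term p.2 (1/2) τ) (e1 (Sum.inl x)))
        = fun p : ℤ × ℤ => jacobiTheta₂_term p.1 0 (2*τ) * jacobiTheta₂_term p.2 0 (2*τ) := by
      funext ⟨u, v⟩
      simp only [e1, Equiv.ofBijective_apply, φ1, Sum.elim_inl, jacobiTheta₂_term,
        ← Complex.exp_add]
      exact cexp_eq_cexp u (by push_cast; ring)
    rw [he]; exact A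
  have hB : HasSum (fun x : ℤ × ℤ =>
      (fun p : ℤ × ℤ => jacobiTheta₂_term p.1 (1/2) τ * jacobiTheta₂_term p.2 (1/2) τ) (e1 (Sum.inr x)))
      (-(T2 (2*τ) * T2 (2*τ))) := by
    have he : (fun x : ℤ × ℤ =>
        (fun p : ℤ × ℤ => jacobiTheta₂_term p.1 (1/2) τ * jacobiTheta₂_term p.2 (1/2) τ) (e1 (Sum.inr x)))
        = fun p : ℤ × ℤ => -((cexp (Real.pi * I * (2*τ) / 4) * jacobiTheta₂_term p.1 ((2*τ)/2) (2*τ))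
            * (cexp (Real.pi * I * (2*τ) / 4) * jacobiTheta₂_term p.2 ((2*τ)/2) (2*τ))) := by
      funext ⟨u, v⟩
      simp only [e1, Equiv.ofBijective_apply, φ1, Sum.elim_inr, jacobiTheta₂_term,
        ← Complex.exp_add]
      exact cexp_eq_neg_cexp u (by push_cast; ring)
    rw [he]
    exact B
  have := P.unique (hasSum_sum_equiv e1 hA hB)
  linear_combination this

lemma I3 {τ : ℂ} (hτ : 0 < im τ) : T2 τ ^ 2 = 2 * (T2 (2*τ) * T3 (2*τ)) := by
  have h2 := im_two_mul hτ
  have P := hasSum_prod (hasSum_T2 hτ) (hasSum_T2 hτ) (summable_norm_T2term hτ) (summable_norm_T2term hτ)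
  have A := hasSum_prod (hasSum_T3 h2) (hasSum_T2 h2) (summable_norm_jt 0 h2) (summable_norm_T2term h2)
  have B := hasSum_prod (hasSum_T2 h2) (hasSum_T3 h2) (summable_norm_T2term h2) (summable_norm_jt 0 h2)
  have hA : HasSum (fun x : ℤ × ℤ =>
      (fun p : ℤ × ℤ => (cexp (Real.pi * I * τ / 4) * jacobiTheta₂_term p.1 (τ/2) τ)
        * (cexp (Real.pi * I * τ / 4) * jacobiTheta₂_term p.2 (τ/2) τ)) (e2 (Sum.inl x)))
      (T3 (2*τ) * T2 (2*τ)) := by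
    have he : (fun x : ℤ × ℤ =>
        (fun p : ℤ × ℤ => (cexp (Real.pi * I * τ / 4) * jacobiTheta₂_term p.1 (τ/2) τ)
          * (cexp (Real.pi * I * τ / 4) * jacobiTheta₂_term p.2 (τ/2) τ)) (e2 (Sum.inl x)))
        = fun p : ℤ × ℤ => jacobiTheta₂_term p.1 0 (2*τ)
            * (cexp (Real.pi * I * (2*τ) / 4) * jacobiTheta₂_term p.2 ((2*τ)/2) (2*τ)) := by
      funext ⟨u, v⟩
      simp only [e2, Equiv.ofBijective_apply, φ2, Sum.elim_inl, jacobiTheta₂_term,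
        ← Complex.exp_add]
      exact cexp_eq_cexp 0 (by push_cast; ring)
    rw [he]; exact A
  have hB : HasSum (fun x : ℤ × ℤ =>
      (fun p : ℤ × ℤ => (cexp (Real.pi * I * τ / 4) * jacobiTheta₂_term p.1 (τ/2) τ)
        * (cexp (Real.pi * I * τ / 4) * jacobiTheta₂_term p.2 (τ/2) τ)) (e2 (Sum.inr x)))
      (T2 (2*τ) * T3 (2*τ)) := by
    have he : (fun x : ℤ × ℤ =>
        (fun p : ℤ × ℤ => (cexp (Real.pi * I * τ / 4) * jacobiTheta₂_term p.1 (τ/2) τ)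
          * (cexp (Real.pi * I * τ / 4) * jacobiTheta₂_term p.2 (τ/2) τ)) (e2 (Sum.inr x)))
        = fun p : ℤ × ℤ => (cexp (Real.pi * I * (2*τ) / 4) * jacobiTheta₂_term p.1 ((2*τ)/2) (2*τ))
            * jacobiTheta₂_term p.2 0 (2*τ) := by
      funext ⟨u, v⟩
      simp only [e2, Equiv.ofBijective_apply, φ2, Sum.elim_inr, jacobiTheta₂_term,
        ← Complex.exp_add]
      exact cexp_eq_cexp 0 (by push_cast; ring)
    rw [he]; exact B
  have := P.unique (hasSum_sum_equiv e2 hA hB)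
  linear_combination this

def ψ : ℤ × ℤ → ℤ × ℤ := fun p => (p.1, -1 - p.2)

lemma ψ_invol : Function.Involutive ψ := by
  intro p; simp only [ψ]; exact Prod.ext rfl (by omega)

lemma IA {τ : ℂ} (hτ : 0 < im τ) : T3 τ * T4 τ = T4 (2*τ) ^ 2 := by
  have h2 := im_two_mul hτ
  have P := hasSum_prod (hasSum_T3 hτ) (hasSum_T4 hτ) (summable_norm_jt 0 hτ) (summable_norm_jt _ hτ)
  have A := hasSum_prod (hasSum_T4 h2) (hasSum_T4 h2) (summable_norm_jt _ h2) (summable_norm_jt _ h2)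
  have hA : HasSum (fun x : ℤ × ℤ =>
      (fun p : ℤ × ℤ => jacobiTheta₂_term p.1 0 τ * jacobiTheta₂_term p.2 (1/2) τ) (e1 (Sum.inl x)))
      (T4 (2*τ) * T4 (2*τ)) := by
    have he : (fun x : ℤ × ℤ =>
        (fun p : ℤ × ℤ => jacobiTheta₂_term p.1 0 τ * jacobiTheta₂_term p.2 (1/2) τ) (e1 (Sum.inl x)))
        = fun p : ℤ × ℤ => jacobiTheta₂_term p.1 (1/2) (2*τ) * jacobiTheta₂_term p.2 (1/2) (2*τ) := by
      funext ⟨u, v⟩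
      simp only [e1, Equiv.ofBijective_apply, φ1, Sum.elim_inl, jacobiTheta₂_term,
        ← Complex.exp_add]
      exact cexp_eq_cexp (-v) (by push_cast; ring)
    rw [he]; exact A
  have hB : HasSum (fun x : ℤ × ℤ =>
      (fun p : ℤ × ℤ => jacobiTheta₂_term p.1 0 τ * jacobiTheta₂_term p.2 (1/2) τ) (e1 (Sum.inr x)))
      0 := by
    refine hasSum_zero_of_anti (ψ_invol.toPerm _) ?_ ?_
    · exact P.summable.comp_injective ((Equiv.injective e1).comp Sum.inr_injective)
    · rintro ⟨u, v⟩
      simp only [Function.Involutive.coe_toPerm, ψ, e1, Equiv.ofBijective_apply, φ1,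
        Sum.elim_inr, jacobiTheta₂_term, ← Complex.exp_add, ← neg_mul, ← mul_neg]
      exact cexp_eq_neg_cexp v (by push_cast; ring)
  have := P.unique (hasSum_sum_equiv e1 hA hB)
  rw [this, add_zero]; ring

lemma jacobi_identity {τ : ℂ} (hτ : 0 < im τ) : T3 τ ^ 4 = T2 τ ^ 4 + T4 τ ^ 4 := by
  have h1 := I1 hτ
  have h2 := I2 hτ
  have h3 := I3 hτ
  linear_combination (T3 τ ^ 2 + T3 (2*τ) ^ 2 + T2 (2*τ) ^ 2) * h1
    - (T4 τ ^ 2 + T3 (2*τ) ^ 2 - T2 (2*τ) ^ 2) * h2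
    - (T2 τ ^ 2 + 2 * (T2 (2*τ) * T3 (2*τ))) * h3

lemma T4_eq_T3 (τ : ℂ) : T4 τ = T3 (τ + 1) := by
  unfold T4 T3 jacobiTheta₂
  refine tsum_congr fun n => ?_
  unfold jacobiTheta₂_term
  obtain ⟨k, hk⟩ : Even (n * (n - 1)) := Int.even_mul_pred_self n
  refine cexp_eq_cexp (-k) ?_
  have h : ((n : ℂ)) * (n - 1) = k + k := by exact_mod_cast congrArg (fun m : ℤ => (m : ℂ)) hk
  push_cast
  linear_combination (-(Real.pi : ℂ) * I) * h

lemma T3_ne_zero_of_one_le {τ : ℂ} (h1 : 1 ≤ im τ) : T3 τ ≠ 0 := by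
  intro h0
  have hτ : (0:ℝ) < im τ := by linarith
  have hb := norm_jacobiTheta_sub_one_le hτ
  rw [jacobiTheta_eq_jacobiTheta₂, show jacobiTheta₂ 0 τ = T3 τ from rfl, h0] at hb
  simp only [zero_sub, norm_neg, norm_one] at hb
  have hπ := Real.pi_gt_three
  have hr : rexp (-π * im τ) ≤ rexp (-3) := by
    apply Real.exp_le_exp.mpr; nlinarith
  have h4 : rexp (-3) ≤ 1/4 := by
    rw [Real.exp_neg]
    have h3 : (4:ℝ) ≤ rexp 3 := by linarith [Real.add_one_le_exp (3:ℝ)]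
    rw [inv_le_comm₀ (by linarith) (by norm_num)]
    linarith
  have hrpos : 0 < rexp (-π * im τ) := Real.exp_pos _
  set r := rexp (-π * im τ) with hrdef
  have h1r : 0 < 1 - r := by linarith
  rw [div_mul_eq_mul_div, le_div_iff₀ h1r] at hb
  linarith

lemma T3_ne_zero {τ : ℂ} (hτ : 0 < im τ) : T3 τ ≠ 0 := by
  intro h0
  set g : ℕ → ℂ := fun k => Nat.rec τ (fun _ x => 2 * x + 1) k with hg
  have key : ∀ k : ℕ, T3 (g k) = 0 ∧ im (g k) = 2^k * im τ := by
    intro k; induction k with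
    | zero => simpa [hg] using h0
    | succ n ih =>
      obtain ⟨hz, him⟩ := ih
      have hgτ : 0 < im (g n) := by rw [him]; positivity
      have step : T3 (2 * g n + 1) = 0 := by
        have hIA := IA hgτ
        rw [hz, zero_mul] at hIA
        have h4 : T4 (2 * g n) = 0 :=
          (pow_eq_zero_iff two_ne_zero).mp hIA.symm
        rwa [T4_eq_T3] at h4
      refine ⟨step, ?_⟩
      show im (2 * g n + 1) = 2 ^ (n+1) * im τ
      simp only [Complex.add_im, Complex.mul_im, Complex.one_im, Complex.re_ofNat,
        Complex.im_ofNat, zero_mul, add_zero]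
      rw [him]; ring
  obtain ⟨k, hk⟩ := pow_unbounded_of_one_lt (1 / im τ) (one_lt_two (α := ℝ))
  have h1 : 1 ≤ im (g k) := by
    rw [(key k).2]
    rw [div_lt_iff₀ hτ] at hk
    calc (1:ℝ) ≤ 2^k * im τ := by linarith
    _ = _ := rfl
  exact T3_ne_zero_of_one_le h1 (key k).1

lemma thetaChar_half_zero (τ : ℂ) : thetaChar (1/2) 0 0 τ = T2 τ := by
  unfold thetaChar T2
  congr 1
  · exact congrArg Complex.exp (by push_cast; ring)
  · congr 1
    push_cast; ring

lemma thetaChar_zero_half (τ : ℂ) : thetaChar 0 (1/2) 0 τ = T4 τ := by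
  unfold thetaChar T4
  rw [show (Real.pi : ℂ) * Complex.I * ((0:ℝ) : ℂ)^2 * τ +
      2 * Real.pi * Complex.I * ((0:ℝ) : ℂ) * (0 + ((1/2 : ℝ) : ℂ)) = 0 by push_cast; ring,
    Complex.exp_zero, one_mul]
  congr 1
  push_cast; ring

/-- for every τ in the upper half plane, `k(τ) ≠ 2`. -/
theorem kFun_ne_two (τ : UpperHalfPlane) : kFun (τ : ℂ) ≠ 2 := by
  intro h
  have hτ : 0 < im (τ : ℂ) := τ.2
  unfold kFun at h
  rw [thetaChar_half_zero, thetaChar_zero_half] at h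
  by_cases hAB : (T2 (τ:ℂ)) ^ 4 * (T4 (τ:ℂ)) ^ 4 = 0
  · rw [hAB, div_zero] at h
    exact absurd h (by norm_num)
  · rw [div_eq_iff hAB] at h
    have hsq : (T2 (τ:ℂ) ^ 4 + T4 (τ:ℂ) ^ 4) ^ 2 = 0 := by linear_combination -h
    have hsum : T2 (τ:ℂ) ^ 4 + T4 (τ:ℂ) ^ 4 = 0 := (pow_eq_zero_iff two_ne_zero).mp hsq
    have hz : T3 (τ:ℂ) ^ 4 = 0 := by rw [jacobi_identity hτ]; exact hsum
    exact T3_ne_zero hτ ((pow_eq_zero_iff (by norm_num : (4:ℕ) ≠ 0)).mp hz)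
end
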